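/- arXiv:1001.0535 — 2 statements merged into one kernel-verified Lean document; each statement's English description precedes it below -/
import Mathlib

section
/- For positive real numbers a, b and ν ∈ [0,1] with r = min{ν, 1−ν}, we have S(√(a/b)) a^{1−ν} b^ν ≥ (1−ν)a + νb − r(√a − √b)², where S is Specht's ratio. -/
/-- Specht's ratio `S(h) = h^{1/(h-1)} / (e log h^{1/(h-1)})` for `h ≠ 1`, with `S(1) = 1`. -/
noncomputable def specht (h : ℝ) : ℝ :=
  if h = 1 then 1
  else h ^ ((1:ℝ)/(h-1)) / (Real.exp 1 * Real.log (h ^ ((1:ℝ)/(h-1))))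

lemma exp_tangent (x x0 : ℝ) : Real.exp x0 * (1 + x - x0) ≤ Real.exp x := by
  have h1 := Real.add_one_le_exp (x - x0)
  have h2 : Real.exp x0 * (1 + x - x0) ≤ Real.exp x0 * Real.exp (x - x0) := by
    have := (Real.exp_pos x0).le
    nlinarith
  calc Real.exp x0 * (1 + x - x0) ≤ Real.exp x0 * Real.exp (x - x0) := h2
    _ = Real.exp x := by rw [← Real.exp_add]; ring_nf

lemma specht_key (h : ℝ) (hh : 0 < h) (t : ℝ) :
    (1 - t) * h + t ≤ specht h * h ^ (1 - t) := by
  rcases eq_or_ne h 1 with rfl | hne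
  · simp [specht]
  · have hL : Real.log h ≠ 0 := by
      intro h0
      exact hne (Real.log_eq_zero.mp h0 |>.elim (fun e => absurd e hh.ne') (fun e => e.elim id (by intro e; linarith)))
    have hd : h - 1 ≠ 0 := sub_ne_zero.mpr hne
    set L := Real.log h with hLdef
    have hc : 0 < (h - 1) / L := by
      rcases lt_or_gt_of_ne hne with hlt | hgt
      · exact div_pos_of_neg_of_neg (by linarith) (Real.log_neg hh hlt)
      · exact div_pos (by linarith) (Real.log_pos hgt)
    have hS : specht h = Real.exp (L / (h - 1)) * ((h - 1) / (Real.exp 1 * L)) := by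
      rw [specht, if_neg hne, Real.log_rpow hh, Real.rpow_def_of_pos hh]
      rw [hLdef]
      field_simp
    have hht : h ^ (1 - t) = Real.exp ((1 - t) * L) := by
      rw [Real.rpow_def_of_pos hh, hLdef]; ring_nf
    rw [hS, hht]
    have tang := exp_tangent ((1 - t) * L) (1 - L / (h - 1))
    have hfac : 0 < Real.exp (L / (h - 1)) * ((h - 1) / (Real.exp 1 * L)) := by
      have : (h - 1) / (Real.exp 1 * L) = ((h - 1) / L) / Real.exp 1 := by
        field_simp
      rw [this]
      positivity
    have key := mul_le_mul_of_nonneg_left tang hfac.le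
    refine le_trans ?_ key
    have hexp : Real.exp (1 - L / (h - 1)) = Real.exp 1 * Real.exp (-(L / (h - 1))) := by
      rw [← Real.exp_add]; ring_nf
    rw [hexp]
    have hE := Real.exp_ne_zero 1
    have hE2 := Real.exp_ne_zero (L / (h - 1))
    have hexp2 : Real.exp (-(L / (h - 1))) = (Real.exp (L / (h - 1)))⁻¹ := Real.exp_neg _
    rw [hexp2]
    have expand : Real.exp (L / (h - 1)) * ((h - 1) / (Real.exp 1 * L)) *
        (Real.exp 1 * (Real.exp (L / (h - 1)))⁻¹ * (1 + (1 - t) * L - (1 - L / (h - 1))))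
        = (h - 1) / L * ((1 - t) * L + L / (h - 1)) := by
      field_simp
      ring
    rw [expand]
    have final : (h - 1) / L * ((1 - t) * L + L / (h - 1)) = (1 - t) * (h - 1) + 1 := by
      field_simp
    rw [final]
    linarith

lemma specht_reverse_young (x y : ℝ) (hx : 0 < x) (hy : 0 < y) (t : ℝ) :
    (1 - t) * x + t * y ≤ specht (x / y) * (x ^ (1 - t) * y ^ t) := by
  have h := specht_key (x / y) (div_pos hx hy) t
  have h2 := mul_le_mul_of_nonneg_right h hy.le
  have e1 : ((1 - t) * (x / y) + t) * y = (1 - t) * x + t * y := by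
    field_simp
  have e2 : specht (x / y) * (x / y) ^ (1 - t) * y = specht (x / y) * (x ^ (1 - t) * y ^ t) := by
    rw [Real.div_rpow hx.le hy.le]
    rw [mul_assoc]
    congr 1
    have hyt : y / y ^ (1 - t) = y ^ t := by
      nth_rewrite 1 [← Real.rpow_one y]
      rw [← Real.rpow_sub hy]
      norm_num
    rw [← hyt]; ring
  rw [e1, e2] at h2
  exact h2

theorem reverse_ratio_refined_young (a b : ℝ) (ha : 0 < a) (hb : 0 < b)
    (ν : ℝ) (hν : ν ∈ Set.Icc (0:ℝ) 1) (r : ℝ) (hr : r = min ν (1 - ν)) :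
    (1 - ν) * a + ν * b - r * (Real.sqrt a - Real.sqrt b) ^ 2 ≤
      specht (Real.sqrt (a / b)) * (a ^ (1 - ν) * b ^ ν) := by
  obtain ⟨h0, h1⟩ := hν
  have sa : 0 < Real.sqrt a := Real.sqrt_pos.mpr ha
  have sb : 0 < Real.sqrt b := Real.sqrt_pos.mpr hb
  have hsq : (Real.sqrt a - Real.sqrt b) ^ 2 = a + b - 2 * (Real.sqrt a * Real.sqrt b) := by
    rw [sub_sq, Real.sq_sqrt ha.le, Real.sq_sqrt hb.le]; ring
  have hdiv : Real.sqrt (a / b) = Real.sqrt a / Real.sqrt b := Real.sqrt_div ha.le b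
  rcases le_or_gt ν (1/2) with hc | hc
  · have hrr : r = ν := by rw [hr]; exact min_eq_left (by linarith)
    have main := specht_reverse_young a (Real.sqrt a * Real.sqrt b) ha (by positivity) (2*ν)
    have harg : a / (Real.sqrt a * Real.sqrt b) = Real.sqrt (a / b) := by
      rw [hdiv]
      calc a / (Real.sqrt a * Real.sqrt b)
          = (Real.sqrt a * Real.sqrt a) / (Real.sqrt a * Real.sqrt b) := by
            rw [Real.mul_self_sqrt ha.le]
        _ = Real.sqrt a / Real.sqrt b := mul_div_mul_left _ _ sa.ne'
    have hpow : a ^ (1 - 2*ν) * (Real.sqrt a * Real.sqrt b) ^ (2*ν) = a ^ (1-ν) * b ^ ν := by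
      rw [Real.mul_rpow (Real.sqrt_nonneg a) (Real.sqrt_nonneg b),
          Real.sqrt_eq_rpow, Real.sqrt_eq_rpow,
          ← Real.rpow_mul ha.le, ← Real.rpow_mul hb.le,
          ← mul_assoc, ← Real.rpow_add ha]
      rw [show (1 - 2*ν) + 1/2 * (2*ν) = 1 - ν by ring, show 1/2 * (2*ν) = ν by ring]
    rw [harg, hpow] at main
    rw [hrr, hsq]
    have : (1 - ν) * a + ν * b - ν * (a + b - 2 * (Real.sqrt a * Real.sqrt b))
        = (1 - 2*ν) * a + 2*ν * (Real.sqrt a * Real.sqrt b) := by ring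
    rw [this]
    exact main
  · have hrr : r = 1 - ν := by rw [hr]; exact min_eq_right (by linarith)
    have main := specht_reverse_young (Real.sqrt a * Real.sqrt b) b (by positivity) hb (2*ν - 1)
    rw [show (1:ℝ) - (2*ν - 1) = 2 - 2*ν by ring] at main
    have harg : (Real.sqrt a * Real.sqrt b) / b = Real.sqrt (a / b) := by
      rw [hdiv]
      calc (Real.sqrt a * Real.sqrt b) / b
          = (Real.sqrt a * Real.sqrt b) / (Real.sqrt b * Real.sqrt b) := by
            rw [Real.mul_self_sqrt hb.le]
        _ = Real.sqrt a / Real.sqrt b := mul_div_mul_right _ _ sb.ne'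
    have hpow : (Real.sqrt a * Real.sqrt b) ^ (2 - 2*ν) * b ^ (2*ν - 1) = a ^ (1-ν) * b ^ ν := by
      rw [Real.mul_rpow (Real.sqrt_nonneg a) (Real.sqrt_nonneg b),
          Real.sqrt_eq_rpow, Real.sqrt_eq_rpow,
          ← Real.rpow_mul ha.le, ← Real.rpow_mul hb.le,
          mul_assoc, ← Real.rpow_add hb]
      rw [show 1/2 * (2 - 2*ν) = 1 - ν by ring,
          show (1 - ν) + (2*ν - 1) = ν by ring]
    rw [harg, hpow] at main
    rw [hrr, hsq]
    have : (1 - ν) * a + ν * b - (1 - ν) * (a + b - 2 * (Real.sqrt a * Real.sqrt b))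
        = (2 - 2*ν) * (Real.sqrt a * Real.sqrt b) + (2*ν - 1) * b := by ring
    rw [this]
    exact main
end

section
/- Let A, B be positive invertible operators with mI ≤ A, B ≤ MI, 0 < m < M, h = M/m, ν ∈ [0,1], r = min{ν, 1−ν}. Then S(√h) · A♯_ν B ≥ (1−ν)A + νB − 2r((A+B)/2 − A♯_{1/2}B) in the Loewner order. -/
variable {H : Type*} [NormedAddCommGroup H] [InnerProductSpace ℂ H] [CompleteSpace H]

/-- The weighted operator geometric mean `A ♯_ν B = A^{1/2} (A^{-1/2} B A^{-1/2})^ν A^{1/2}`. -/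
noncomputable def geomMean (A B : H →L[ℂ] H) (ν : ℝ) : H →L[ℂ] H :=
  A ^ ((1:ℝ)/2) * (A ^ (-(1:ℝ)/2) * B * A ^ (-(1:ℝ)/2)) ^ ν * A ^ ((1:ℝ)/2)

lemma specht_eq {h : ℝ} (hh : 1 < h) :
    specht h = ((h-1)/Real.log h) * Real.exp (Real.log h/(h-1) - 1) := by
  have h0 : (0:ℝ) < h := by linarith
  have hL : 0 < Real.log h := Real.log_pos hh
  have hK : 0 < h - 1 := by linarith
  rw [specht, if_neg (by linarith : h ≠ 1), Real.log_rpow h0,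
    Real.rpow_def_of_pos h0, Real.exp_sub]
  have he : 0 < Real.exp 1 := Real.exp_pos 1
  rw [mul_comm (Real.log h) (1/(h-1)), one_div, inv_mul_eq_div]
  field_simp

lemma specht_tangent {h : ℝ} (hh : 1 < h) (μ : ℝ) :
    1 + μ*(h-1) ≤ specht h * h ^ μ := by
  have h0 : (0:ℝ) < h := by linarith
  have hL : 0 < Real.log h := Real.log_pos hh
  have hK : 0 < h - 1 := by linarith
  rw [specht_eq hh, Real.rpow_def_of_pos h0]
  set L := Real.log h with hLdef
  set K := h - 1 with hKdef
  have key : ((K/L) * Real.exp (L/K - 1)) * Real.exp (L * μ)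
      = (K/L) * Real.exp (μ*L + L/K - 1) := by
    rw [mul_assoc, ← Real.exp_add]; ring_nf
  rw [key]
  have hexp : (μ*L + L/K - 1) + 1 ≤ Real.exp (μ*L + L/K - 1) := Real.add_one_le_exp _
  have hKL : 0 < K / L := by positivity
  calc 1 + μ*K = (K/L) * (μ*L + L/K) := by field_simp; ring
    _ ≤ (K/L) * Real.exp (μ*L + L/K - 1) := by
        apply mul_le_mul_of_nonneg_left _ hKL.le
        linarith

lemma one_le_specht {h : ℝ} (hh : 1 < h) : 1 ≤ specht h := by
  have := specht_tangent hh 0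
  simpa using this

lemma specht_bound {h : ℝ} (hh : 1 < h) {l s : ℝ} (hl0 : 0 ≤ l) (hl1 : l ≤ 1)
    (hs1 : 1/h ≤ s) (hs2 : s ≤ h) : 1 + l*(s-1) ≤ specht h * s ^ l := by
  have h0 : (0:ℝ) < h := by linarith
  have hS1 : 1 ≤ specht h := one_le_specht hh
  have hS0 : 0 ≤ specht h := by linarith
  -- endpoint inequalities
  have endH : 1 + l*(h-1) ≤ specht h * h ^ l := specht_tangent hh l
  have endinv : 1 + l*(1/h-1) ≤ specht h * (1/h) ^ l := by
    have t := specht_tangent hh (1-l)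
    have hpow : h ^ (1-l) = h * h ^ (-l) := by
      rw [sub_eq_add_neg, Real.rpow_add h0, Real.rpow_one]
    have hinv : (1/h) ^ l = h ^ (-l) := by
      rw [one_div, ← Real.rpow_neg_one h, ← Real.rpow_mul h0.le]
      ring_nf
    rw [hinv]
    rw [hpow] at t
    have hhalf : (1 + (1-l)*(h-1))/h ≤ specht h * h ^ (-l) := by
      rw [div_le_iff₀ h0]
      calc 1 + (1-l)*(h-1) ≤ specht h * (h * h ^ (-l)) := t
        _ = specht h * h ^ (-l) * h := by ring
    calc 1 + l*(1/h-1) = (1 + (1-l)*(h-1))/h := by field_simp; ring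
      _ ≤ specht h * h ^ (-l) := hhalf
  -- concavity interpolation
  set θ : ℝ := (h - s)/(h - 1/h) with hθ
  have hden : 0 < h - 1/h := by
    have : 1/h < 1 := by rw [div_lt_one h0]; exact hh
    linarith
  have hθ0 : 0 ≤ θ := by
    apply div_nonneg _ hden.le; linarith
  have hθ1 : θ ≤ 1 := by
    rw [div_le_one hden]
    have : 1/h ≤ s := hs1
    linarith
  have hne : h - 1/h ≠ 0 := ne_of_gt hden
  have hmul : θ * (h - 1/h) = h - s := by
    rw [hθ, div_mul_cancel₀ _ hne]
  have hcomb : θ * (1/h) + (1-θ) * h = s := by linear_combination -hmul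
  have hconc := (Real.concaveOn_rpow hl0 hl1).2
      (Set.mem_Ici.mpr (by positivity : (0:ℝ) ≤ 1/h))
      (Set.mem_Ici.mpr (by positivity : (0:ℝ) ≤ h)) hθ0 (by linarith : 0 ≤ 1-θ)
      (by ring : θ + (1-θ) = 1)
  simp only [smul_eq_mul] at hconc
  rw [hcomb] at hconc
  calc 1 + l*(s-1) = θ * (1 + l*(1/h-1)) + (1-θ) * (1 + l*(h-1)) := by
        rw [← hcomb]; ring
    _ ≤ θ * (specht h * (1/h) ^ l) + (1-θ) * (specht h * h ^ l) := by
        apply add_le_add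
        · exact mul_le_mul_of_nonneg_left endinv hθ0
        · exact mul_le_mul_of_nonneg_left endH (by linarith)
    _ = specht h * (θ * (1/h) ^ l + (1-θ) * h ^ l) := by ring
    _ ≤ specht h * s ^ l := mul_le_mul_of_nonneg_left hconc hS0

lemma rpow_half_mul_self {a : ℝ} (ha : 0 ≤ a) : (a*a) ^ ((1:ℝ)/2) = a := by
  rw [show a*a = a^(2:ℕ) by ring, ← Real.rpow_natCast a 2, ← Real.rpow_mul ha]
  norm_num

lemma scalar_key {h : ℝ} (hh : 1 < h) {ν : ℝ} (hν0 : 0 ≤ ν) (hν1 : ν ≤ 1) {x : ℝ}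
    (hx1 : 1/(h*h) ≤ x) (hx2 : x ≤ h*h) :
    (1-ν) + ν*x - 2*(min ν (1-ν))*((1+x)/2 - x ^ ((1:ℝ)/2)) ≤ specht h * x ^ ν := by
  have h0 : (0:ℝ) < h := by linarith
  have hx0 : (0:ℝ) < x := lt_of_lt_of_le (by positivity) hx1
  set s : ℝ := x ^ ((1:ℝ)/2) with hs
  have hs0 : 0 < s := Real.rpow_pos_of_pos hx0 _
  have hss : s * s = x := by
    rw [hs, ← Real.rpow_add hx0]; norm_num
  have hsh : s ≤ h := by
    have h1 : x ^ ((1:ℝ)/2) ≤ (h*h) ^ ((1:ℝ)/2) :=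
      Real.rpow_le_rpow hx0.le hx2 (by norm_num)
    rwa [rpow_half_mul_self h0.le] at h1
  have hsl : 1/h ≤ s := by
    have h1 : (1/(h*h)) ^ ((1:ℝ)/2) ≤ x ^ ((1:ℝ)/2) :=
      Real.rpow_le_rpow (by positivity) hx1 (by norm_num)
    rwa [show (1:ℝ)/(h*h) = (1/h)*(1/h) by ring, rpow_half_mul_self (by positivity)] at h1
  rcases le_total ν (1-ν) with hcase | hcase
  · -- min = ν
    rw [min_eq_left hcase]
    have hb := specht_bound hh (by linarith : (0:ℝ) ≤ 2*ν) (by linarith : 2*ν ≤ 1) hsl hsh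
    have hpow : s ^ (2*ν) = x ^ ν := by
      rw [hs, ← Real.rpow_mul hx0.le]
      congr 1; ring
    rw [hpow] at hb
    linarith [hb]
  · -- min = 1-ν
    rw [min_eq_right hcase]
    have hsl' : 1/h ≤ 1/s := by
      apply one_div_le_one_div_of_le hs0 hsh
    have hsh' : 1/s ≤ h := by
      rw [div_le_iff₀ hs0]
      calc (1:ℝ) = h * (1/h) := by field_simp
        _ ≤ h * s := by
            apply mul_le_mul_of_nonneg_left hsl h0.le
    have hb := specht_bound hh (by linarith : (0:ℝ) ≤ 2-2*ν) (by linarith : 2-2*ν ≤ 1) hsl' hsh'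
    have hxs : x * (1/s) = s := by
      rw [← hss]; field_simp
    have hinv : x * (1/s) ^ (2-2*ν) = x ^ ν := by
      rw [one_div, ← Real.rpow_neg_one s, ← Real.rpow_mul hs0.le, hs, ← Real.rpow_mul hx0.le]
      nth_rewrite 1 [← Real.rpow_one x]
      rw [← Real.rpow_add hx0]
      congr 1; ring
    have h2 := mul_le_mul_of_nonneg_left hb hx0.le
    have e1 : x * (1 + (2-2*ν)*(1/s - 1)) = (2*ν-1)*x + (2-2*ν)*s := by
      have e0 : x * (1 + (2-2*ν)*(1/s - 1)) = x + (2-2*ν)*(x*(1/s)) - (2-2*ν)*x := by ring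
      rw [e0, hxs]; ring
    have e2 : x * (specht h * (1/s) ^ (2-2*ν)) = specht h * x ^ ν := by
      rw [← hinv]; ring
    rw [e1, e2] at h2
    linarith [h2]

open scoped NNReal

section OperatorLemmas

lemma op_one_nonneg : (0 : H →L[ℂ] H) ≤ 1 := by
  simpa using star_mul_self_nonneg (1 : H →L[ℂ] H)

set_option maxHeartbeats 1000000 in
set_option synthInstance.maxHeartbeats 200000 in
lemma op_smul_nonneg {c : ℝ} (hc : 0 ≤ c) {Z : H →L[ℂ] H} (h : 0 ≤ Z) : 0 ≤ c • Z := by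
  have key := star_left_conjugate_nonneg h ((Real.sqrt c) • (1 : H →L[ℂ] H))
  rw [star_smul, star_trivial, star_one] at key
  simpa [smul_mul_assoc, mul_smul_comm, smul_smul, Real.mul_self_sqrt hc] using key

set_option maxHeartbeats 1000000 in
set_option synthInstance.maxHeartbeats 200000 in
lemma op_smul_le_smul {c : ℝ} (hc : 0 ≤ c) {X Y : H →L[ℂ] H} (h : X ≤ Y) : c • X ≤ c • Y := by
  rw [← sub_nonneg, ← smul_sub]
  exact op_smul_nonneg hc (sub_nonneg.2 h)

lemma rpow_eq_cfc_real {T : H →L[ℂ] H} (hT : 0 ≤ T) (y : ℝ) :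
    T ^ y = cfc (fun x : ℝ => x ^ y) T := by
  rw [CFC.rpow_def, cfc_nnreal_eq_real _ _ hT]
  apply cfc_congr
  intro x hx
  have hx0 : 0 ≤ x := spectrum_nonneg_of_nonneg hT hx
  simp [NNReal.coe_rpow, Real.coe_toNNReal x hx0]

end OperatorLemmas

set_option maxHeartbeats 4000000 in
set_option synthInstance.maxHeartbeats 400000 in
theorem reverse_ratio_refined_young_operator (A B : H →L[ℂ] H)
    (hAu : IsUnit A) (hBu : IsUnit B) (m M : ℝ) (hm : 0 < m) (hmM : m < M)
    (hmA : m • (1 : H →L[ℂ] H) ≤ A) (hAM : A ≤ M • (1 : H →L[ℂ] H))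
    (hmB : m • (1 : H →L[ℂ] H) ≤ B) (hBM : B ≤ M • (1 : H →L[ℂ] H))
    (ν : ℝ) (hν : ν ∈ Set.Icc (0:ℝ) 1) (r : ℝ) (hr : r = min ν (1 - ν)) :
    (1 - ν) • A + ν • B - (2 * r) • ((1/2 : ℝ) • (A + B) - geomMean A B (1/2)) ≤
      specht (Real.sqrt (M / m)) • geomMean A B ν := by
  obtain ⟨hν0, hν1⟩ := hν
  have hM : 0 < M := lt_trans hm hmM
  have hA0 : (0 : H →L[ℂ] H) ≤ A := le_trans (op_smul_nonneg hm.le op_one_nonneg) hmA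
  have hB0 : (0 : H →L[ℂ] H) ≤ B := le_trans (op_smul_nonneg hm.le op_one_nonneg) hmB
  have hAspec0 : (0:ℝ≥0) ∉ spectrum ℝ≥0 A := spectrum.zero_notMem ℝ≥0 hAu
  set Ah := A ^ ((1:ℝ)/2) with hAh_def
  set Ai := A ^ (-(1:ℝ)/2) with hAi_def
  have hAh0 : (0 : H →L[ℂ] H) ≤ Ah := CFC.rpow_nonneg
  have hAi0 : (0 : H →L[ℂ] H) ≤ Ai := CFC.rpow_nonneg
  have hAhsa : IsSelfAdjoint Ah := .of_nonneg hAh0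
  have hAisa : IsSelfAdjoint Ai := .of_nonneg hAi0
  have hneg : (-(1:ℝ)/2) = -((1:ℝ)/2) := by ring
  have hmul1 : Ah * Ai = 1 := by
    rw [hAh_def, hAi_def, hneg]
    exact CFC.rpow_mul_rpow_neg _ (IsStrictlyPositive.iff_of_unital.mp ⟨hA0, hAu⟩)
  have hmul2 : Ai * Ah = 1 := by
    rw [hAh_def, hAi_def, hneg]
    exact CFC.rpow_neg_mul_rpow _ (IsStrictlyPositive.iff_of_unital.mp ⟨hA0, hAu⟩)
  have hAh2 : Ah * Ah = A := by
    have h1 := CFC.rpow_add (a := A) (x := (1:ℝ)/2) (y := (1:ℝ)/2) hAu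
    rw [show (1:ℝ)/2 + (1:ℝ)/2 = (1:ℝ) by norm_num, CFC.rpow_one A hA0] at h1
    exact h1.symm
  set T := Ai * B * Ai with hT_def
  have hT0 : (0 : H →L[ℂ] H) ≤ T := by
    have := star_left_conjugate_nonneg hB0 Ai
    rwa [hAisa.star_eq] at this
  have hTsa : IsSelfAdjoint T := .of_nonneg hT0
  have hAiA : Ai * A * Ai = 1 := by
    rw [← hAh2, ← mul_assoc Ai Ah Ah, mul_assoc (Ai*Ah) Ah Ai, hmul2, hmul1, one_mul]
  have hconjB : Ah * T * Ah = B := by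
    rw [hT_def, ← mul_assoc, ← mul_assoc, hmul1, one_mul, mul_assoc, hmul2, mul_one]
  have hconj_smul : ∀ (c : ℝ) (X Z : H →L[ℂ] H), X * (c • Z) * X = c • (X * Z * X) := by
    intro c X Z
    simp [smul_mul_assoc, mul_smul_comm]
  -- bounds on Ai * Ai
  have step1 : m • (Ai * Ai) ≤ 1 := by
    have h1 := hAisa.conjugate_le_conjugate hmA
    rwa [hAiA, hconj_smul, mul_one] at h1
  have step2 : (1 : H →L[ℂ] H) ≤ M • (Ai * Ai) := by
    have h1 := hAisa.conjugate_le_conjugate hAM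
    rwa [hAiA, hconj_smul, mul_one] at h1
  have AiAi_ub : Ai * Ai ≤ m⁻¹ • 1 := by
    have h1 := op_smul_le_smul (inv_nonneg.mpr hm.le) step1
    rwa [smul_smul, inv_mul_cancel₀ hm.ne', one_smul] at h1
  have AiAi_lb : M⁻¹ • (1 : H →L[ℂ] H) ≤ Ai * Ai := by
    have h1 := op_smul_le_smul (inv_nonneg.mpr hM.le) step2
    rwa [smul_smul, inv_mul_cancel₀ hM.ne', one_smul] at h1
  -- bounds on T
  have hTub : T ≤ (M/m) • 1 := by
    have h1 := hAisa.conjugate_le_conjugate hBM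
    rw [hconj_smul, mul_one] at h1
    refine le_trans h1 ?_
    have h2 := op_smul_le_smul hM.le AiAi_ub
    rwa [smul_smul, ← div_eq_mul_inv] at h2
  have hTlb : (m/M) • (1 : H →L[ℂ] H) ≤ T := by
    have h1 := hAisa.conjugate_le_conjugate hmB
    rw [hconj_smul, mul_one] at h1
    refine le_trans ?_ h1
    have h2 := op_smul_le_smul hm.le AiAi_lb
    rwa [smul_smul, ← div_eq_mul_inv] at h2
  -- spectrum bounds
  have hspec_ub : ∀ x ∈ spectrum ℝ T, x ≤ M/m := by
    have := (le_algebraMap_iff_spectrum_le (R := ℝ) (r := M/m) (a := T) hTsa).mp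
    apply this
    rwa [Algebra.algebraMap_eq_smul_one]
  have hspec_lb : ∀ x ∈ spectrum ℝ T, m/M ≤ x := by
    have := (algebraMap_le_iff_le_spectrum (R := ℝ) (r := m/M) (a := T) hTsa).mp
    apply this
    rwa [Algebra.algebraMap_eq_smul_one]
  -- the Specht constant
  set Hc := Real.sqrt (M/m) with hHc
  have hMm1 : 1 < M/m := (one_lt_div hm).mpr hmM
  have hHc1 : 1 < Hc := by
    rw [hHc, show (1:ℝ) = Real.sqrt 1 by simp]
    exact Real.sqrt_lt_sqrt zero_le_one hMm1
  have hHcHc : Hc * Hc = M/m := Real.mul_self_sqrt (by positivity)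
  have hr0 : 0 ≤ r := by
    rw [hr]; exact le_min hν0 (by linarith)
  -- spectrum positivity helper
  have hspec_pos : ∀ x ∈ spectrum ℝ T, 0 < x := by
    intro x hx
    have := hspec_lb x hx
    have : 0 < m/M := by positivity
    linarith [hspec_lb x hx]
  have hcont_half : ContinuousOn (fun x : ℝ => x ^ ((1:ℝ)/2)) (spectrum ℝ T) := by
    intro x hx
    exact (Real.continuousAt_rpow_const x _ (Or.inl (hspec_pos x hx).ne')).continuousWithinAt
  have hcont_nu : ContinuousOn (fun x : ℝ => x ^ ν) (spectrum ℝ T) := by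
    intro x hx
    exact (Real.continuousAt_rpow_const x _ (Or.inl (hspec_pos x hx).ne')).continuousWithinAt
  -- core inequality at the level of T
  have key : (1-ν) • (1 : H →L[ℂ] H) + ν • T
      - (2*r) • ((1/2:ℝ) • (1 + T) - T ^ ((1:ℝ)/2))
      ≤ specht Hc • T ^ ν := by
    have hfT : cfc (fun x : ℝ => ((1-ν) + ν*x) - (2*r) * ((1/2:ℝ) * (1+x) - x ^ ((1:ℝ)/2))) T
        = (1-ν) • (1 : H →L[ℂ] H) + ν • T
          - (2*r) • ((1/2:ℝ) • (1 + T) - T ^ ((1:ℝ)/2)) := by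
      rw [cfc_sub _ _ T (by fun_prop) (by
        apply ContinuousOn.mul (by fun_prop)
        exact ContinuousOn.sub (by fun_prop) hcont_half)]
      congr 1
      · rw [cfc_add (a := T) (fun _ => (1-ν)) (fun x => ν*x) (by fun_prop) (by fun_prop),
          cfc_const _ _ hTsa, cfc_const_mul_id ν T hTsa, Algebra.algebraMap_eq_smul_one]
      · have e1 : (fun x : ℝ => (2*r) * ((1/2:ℝ) * (1+x) - x ^ ((1:ℝ)/2)))
            = fun x : ℝ => (2*r) • ((1/2:ℝ) • (1+x) - x ^ ((1:ℝ)/2)) := by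
          ext x; simp [smul_eq_mul]
        rw [e1, cfc_smul (2*r) _ T (by
          exact ContinuousOn.sub (by fun_prop) hcont_half)]
        congr 1
        rw [cfc_sub _ _ T (by fun_prop) hcont_half]
        congr 1
        · have e2 : (fun x : ℝ => (1/2:ℝ) • (1+x)) = fun x : ℝ => (1/2:ℝ) • ((fun y : ℝ => 1+y) x) := rfl
          rw [e2, cfc_smul ((1/2:ℝ)) _ T (by fun_prop)]
          congr 1
          rw [cfc_add (a := T) (fun _ => (1:ℝ)) (fun x => x) (by fun_prop) (by fun_prop),
            cfc_const _ _ hTsa, cfc_id' ℝ T hTsa, map_one]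
        · exact (rpow_eq_cfc_real hT0 ((1:ℝ)/2)).symm
    have hgT : cfc (fun x : ℝ => specht Hc • (x ^ ν)) T = specht Hc • T ^ ν := by
      rw [cfc_smul (specht Hc) _ T hcont_nu, rpow_eq_cfc_real hT0 ν]
    rw [← hfT, ← hgT]
    apply cfc_mono ?_ ((ContinuousOn.sub (by fun_prop) (ContinuousOn.mul (by fun_prop)
      (ContinuousOn.sub (by fun_prop) hcont_half))) :
        ContinuousOn (fun x : ℝ => ((1-ν) + ν*x) - (2*r) * ((1/2:ℝ) * (1+x) - x ^ ((1:ℝ)/2)))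
          (spectrum ℝ T))
      (hcont_nu.const_smul (specht Hc))
    intro x hx
    have hx1 : 1/(Hc*Hc) ≤ x := by
      rw [hHcHc, one_div_div]
      exact hspec_lb x hx
    have hx2 : x ≤ Hc*Hc := by
      rw [hHcHc]; exact hspec_ub x hx
    have := scalar_key hHc1 hν0 hν1 hx1 hx2
    rw [hr]
    simp only [Pi.smul_apply, Pi.sub_apply, smul_eq_mul]
    linarith [this]
  -- conjugate by Ah
  have hconj := hAhsa.conjugate_le_conjugate key
  have hgm : ∀ y : ℝ, geomMean A B y = Ah * T ^ y * Ah := by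
    intro y
    simp only [geomMean, ← hAh_def, ← hAi_def, ← hT_def]
  have hLHS : Ah * ((1-ν) • (1 : H →L[ℂ] H) + ν • T
      - (2*r) • ((1/2:ℝ) • (1 + T) - T ^ ((1:ℝ)/2))) * Ah
      = (1 - ν) • A + ν • B - (2 * r) • ((1/2 : ℝ) • (A + B) - geomMean A B (1/2)) := by
    have expand : ∀ X Y : H →L[ℂ] H, Ah * (X - Y) * Ah = Ah * X * Ah - Ah * Y * Ah := by
      intro X Y; rw [mul_sub, sub_mul]
    have expand2 : ∀ X Y : H →L[ℂ] H, Ah * (X + Y) * Ah = Ah * X * Ah + Ah * Y * Ah := by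
      intro X Y; rw [mul_add, add_mul]
    rw [expand, expand2, hconj_smul, hconj_smul, hconj_smul, expand, hconj_smul, expand2,
      mul_one, hAh2, hconjB, hgm (1/2)]
  have hRHS : Ah * (specht Hc • T ^ ν) * Ah = specht Hc • geomMean A B ν := by
    rw [hconj_smul, hgm ν]
  rw [hLHS, hRHS] at hconj
  exact hconj
end
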